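/- For Case-2 with C > 0, B > 0, and |N₀| < B, the solution with x₀ > 0 given by formula (13) remains positive and bounded for all t ≥ 0; specifically x(t) ≤ max(x₀, K·C/(B - |N₀|)) for all t ≥ 0. -/

import Mathlib

open Real

/-- Case-2 with `|N₀| < B`: the solution stays positive and bounded by
`max(x₀, KC/(B - |N₀|))` for all `t ≥ 0`. -/
theorem case2_positive_bounded
    (K ω B C N₀ x₀ : ℝ) (hK : 0 < K) (hω : 0 < ω) (hB : 0 < B) (hC : 0 < C)
    (hN₀ : |N₀| < B) (hx₀ : 0 < x₀)
    (x : ℝ → ℝ) (hx0 : x 0 = x₀)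
    (hx : ∀ t, 0 ≤ t →
      HasDerivAt x (C * x t - (B + N₀ * Real.sin (ω * t)) * (x t) ^ 2 / K) t) :
    ∀ t, 0 ≤ t → 0 < x t ∧ x t ≤ max x₀ (K * C / (B - |N₀|)) := by
  have hBN : 0 < B - |N₀| := by linarith
  have hcontAt : ∀ t, 0 ≤ t → ContinuousAt x t := fun t ht => (hx t ht).continuousAt
  have hcont : ContinuousOn x (Set.Ici 0) := fun t ht =>
    (hcontAt t ht).continuousWithinAt
  -- Positivity
  have hpos : ∀ t, 0 ≤ t → 0 < x t := by
    intro t ht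
    by_contra hle
    push_neg at hle
    obtain ⟨t₀, ht₀, hxt₀⟩ : ∃ t₀ ∈ Set.Icc (0:ℝ) t, x t₀ = 0 := by
      have h0 : (0:ℝ) ∈ Set.Icc (x t) (x 0) := ⟨hle, by rw [hx0]; exact hx₀.le⟩
      obtain ⟨t₀, ht₀, h⟩ :=
        intermediate_value_Icc' ht (hcont.mono Set.Icc_subset_Ici_self) h0
      exact ⟨t₀, ht₀, h⟩
    set a : ℝ → ℝ := fun u => C - (B + N₀ * Real.sin (ω * u)) * x u / K with ha
    have hacont : ContinuousOn a (Set.Icc 0 t₀) := by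
      apply ContinuousOn.sub continuousOn_const
      apply ContinuousOn.div_const
      exact ContinuousOn.mul (by fun_prop) (hcont.mono Set.Icc_subset_Ici_self)
    obtain ⟨M, hM⟩ := isCompact_Icc.exists_bound_of_continuousOn hacont
    set y : ℝ → ℝ := fun s => x (t₀ - s) with hy
    have hmap : ∀ s ∈ Set.Icc (0:ℝ) t₀, t₀ - s ∈ Set.Ici (0:ℝ) := by
      intro s hs; simp only [Set.mem_Ici]; linarith [hs.2]
    have hycont : ContinuousOn y (Set.Icc 0 t₀) := by
      apply hcont.comp (by fun_prop) hmap
    have hyderiv : ∀ s ∈ Set.Ico (0:ℝ) t₀,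
        HasDerivWithinAt y (-(a (t₀ - s)) * y s) (Set.Ici s) s := by
      intro s hs
      have hts : (0:ℝ) ≤ t₀ - s := by linarith [hs.2]
      have hd := hx (t₀ - s) hts
      have hd' : HasDerivAt x (a (t₀ - s) * x (t₀ - s)) (t₀ - s) := by
        convert hd using 1
        simp only [ha]
        ring
      have hg : HasDerivAt (fun s : ℝ => t₀ - s) (-1) s := by
        simpa using (hasDerivAt_id s).const_sub t₀
      have hcomp : HasDerivAt y (a (t₀ - s) * x (t₀ - s) * -1) s := hd'.comp s hg
      have : HasDerivAt y (-(a (t₀ - s)) * y s) s := by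
        convert hcomp using 1
        simp only [hy]
        ring
      exact this.hasDerivWithinAt
    have hbound : ∀ s ∈ Set.Ico (0:ℝ) t₀,
        ‖-(a (t₀ - s)) * y s‖ ≤ M * ‖y s‖ + 0 := by
      intro s hs
      have h1 : ‖a (t₀ - s)‖ ≤ M := hM (t₀ - s) ⟨by linarith [hs.2], by linarith [hs.1]⟩
      rw [norm_mul, norm_neg, add_zero]
      exact mul_le_mul_of_nonneg_right h1 (norm_nonneg _)
    have hy0 : ‖y 0‖ ≤ 0 := by simp [hy, hxt₀]
    have hG := norm_le_gronwallBound_of_norm_deriv_right_le hycont hyderiv hy0 hbound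
    have ht₀0 : (0:ℝ) ≤ t₀ := ht₀.1
    have := hG t₀ (Set.right_mem_Icc.2 ht₀0)
    rw [gronwallBound_ε0] at this
    simp only [hy, sub_self, hx0, zero_mul] at this
    have : |x₀| ≤ 0 := by simpa [Real.norm_eq_abs] using this
    have := abs_nonneg x₀
    have hx₀' := abs_of_pos hx₀
    linarith [abs_of_pos hx₀]
  -- Upper bound
  intro t ht
  refine ⟨hpos t ht, ?_⟩
  by_contra hgt
  push_neg at hgt
  set M₀ := max x₀ (K * C / (B - |N₀|)) with hM₀
  have hx₀M : x₀ ≤ M₀ := le_max_left _ _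
  have hCM : K * C / (B - |N₀|) ≤ M₀ := le_max_right _ _
  set ε := (x t - M₀) / 2 with hε
  have hεpos : 0 < ε := by simp only [hε]; linarith
  set S := {s : ℝ | s ∈ Set.Icc 0 t ∧ M₀ + ε ≤ x s} with hS
  have hSne : S.Nonempty := ⟨t, ⟨ht, le_rfl⟩, by simp only [hε]; linarith⟩
  have hSclosed : IsClosed S := by
    have : S = Set.Icc 0 t ∩ x ⁻¹' Set.Ici (M₀ + ε) := by
      ext s; simp [hS, Set.mem_Icc, and_comm]
    rw [this]
    exact ContinuousOn.preimage_isClosed_of_isClosed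
      (hcont.mono Set.Icc_subset_Ici_self) isClosed_Icc isClosed_Ici
  have hSbdd : BddBelow S := ⟨0, fun s hs => hs.1.1⟩
  set T := sInf S with hT
  have hTS : T ∈ S := hSclosed.csInf_mem hSne hSbdd
  have hT0 : 0 ≤ T := hTS.1.1
  have hTt : T ≤ t := hTS.1.2
  have hxT : M₀ + ε ≤ x T := hTS.2
  have hTpos : 0 < T := by
    rcases hT0.lt_or_eq with h | h
    · exact h
    · exfalso
      rw [← h] at hxT
      rw [hx0] at hxT
      linarith
  have hlt : ∀ s, 0 ≤ s → s < T → x s < M₀ + ε := by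
    intro s hs0 hsT
    by_contra h
    push_neg at h
    have : s ∈ S := ⟨⟨hs0, le_trans hsT.le hTt⟩, h⟩
    exact absurd (csInf_le hSbdd this) (not_le.2 hsT)
  -- x T = M₀ + ε
  have hmemnhds : Set.Ioo (0:ℝ) T ∈ nhdsWithin T (Set.Iio T) :=
    Ioo_mem_nhdsLT_of_mem ⟨hTpos, le_rfl⟩
  have htend : Filter.Tendsto x (nhdsWithin T (Set.Iio T)) (nhds (x T)) :=
    ((hcontAt T hT0).tendsto).mono_left nhdsWithin_le_nhds
  have hxTle : x T ≤ M₀ + ε := by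
    refine le_of_tendsto htend ?_
    filter_upwards [hmemnhds] with s hs
    exact (hlt s hs.1.le hs.2).le
  have hxTeq : x T = M₀ + ε := le_antisymm hxTle hxT
  -- the derivative at T is negative
  set d := C * x T - (B + N₀ * Real.sin (ω * T)) * (x T) ^ 2 / K with hd
  have hdneg : d < 0 := by
    have hsin : -|N₀| ≤ N₀ * Real.sin (ω * T) := by
      have h1 : |N₀ * Real.sin (ω * T)| ≤ |N₀| := by
        rw [abs_mul]
        calc |N₀| * |Real.sin (ω * T)| ≤ |N₀| * 1 :=
              mul_le_mul_of_nonneg_left (abs_sin_le_one _) (abs_nonneg _)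
          _ = |N₀| := mul_one _
      linarith [neg_abs_le (N₀ * Real.sin (ω * T))]
    have hP : K * C / (B - |N₀|) < x T := by rw [hxTeq]; linarith
    have hP' : K * C < (B - |N₀|) * x T := by
      rw [div_lt_iff₀ hBN] at hP
      linarith
    have hxTpos : 0 < x T := by rw [hxTeq]; positivity
    have h2 : K * C * x T < (B - |N₀|) * x T ^ 2 := by nlinarith
    have h3 : (B - |N₀|) * x T ^ 2 ≤ (B + N₀ * Real.sin (ω * T)) * x T ^ 2 := by
      nlinarith [sq_nonneg (x T)]
    have h4 : K * (C * x T) < (B + N₀ * Real.sin (ω * T)) * x T ^ 2 := by nlinarith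
    simp only [hd]
    rw [sub_neg, lt_div_iff₀ hK]
    linarith
  -- but the left difference quotients are nonnegative, contradiction
  have hW : HasDerivWithinAt x d (Set.Iio T) T := (hx T hT0).hasDerivWithinAt
  rw [hasDerivWithinAt_iff_tendsto_slope] at hW
  have hdiff : Set.Iio T \ {T} = Set.Iio T := by
    apply Set.diff_singleton_eq_self
    simp
  rw [hdiff] at hW
  have hdge : 0 ≤ d := by
    refine ge_of_tendsto hW ?_
    filter_upwards [hmemnhds] with s hs
    rw [slope_def_field]
    have h1 : 0 ≤ x T - x s := by
      have := hlt s hs.1.le hs.2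
      rw [hxTeq]; linarith
    have h2 : 0 ≤ T - s := by linarith [hs.2]
    rw [show (x s - x T) / (s - T) = (x T - x s) / (T - s) by
      rw [← neg_sub (x T), ← neg_sub T s, neg_div_neg_eq]]
    exact div_nonneg h1 h2
  linarith
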